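/- (Proposition 3.1) Let Â and B̂ be color classes of an undirected graph G = (V,E) (associated to implication classes A and B). Then Â = B̂ if and only if Ã = B̃. -/

import Mathlib

open Set

namespace TransOrient

variable {V : Type*}

/-- `E` is the edge set of an undirected graph on the vertex type `V`:
an irreflexive and symmetric relation, given as a set of ordered pairs. -/
def IsGraph (E : Set (V × V)) : Prop :=
  (∀ a : V, (a, a) ∉ E) ∧ (∀ a b : V, (a, b) ∈ E ↔ (b, a) ∈ E)

/-- The forcing relation `Γ` on directed edges:
`(a,b) Γ (a',b')` iff (`a = a'` and `(b,b') ∉ E`) or (`b = b'` and `(a,a') ∉ E`). -/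
def Gamma (E : Set (V × V)) (e e' : V × V) : Prop :=
  e ∈ E ∧ e' ∈ E ∧
    ((e.1 = e'.1 ∧ (e.2, e'.2) ∉ E) ∨ (e.2 = e'.2 ∧ (e.1, e'.1) ∉ E))

/-- The implication classes of `G = (V,E)`: equivalence classes on `E` of
the reflexive-transitive closure of `Γ`. -/
def IsImplicationClass (E : Set (V × V)) (A : Set (V × V)) : Prop :=
  ∃ e ∈ E, A = {e' | Relation.ReflTransGen (Gamma E) e e'}

/-- `A⁻¹ = {(b,a) : (a,b) ∈ A}`. -/
def inv (A : Set (V × V)) : Set (V × V) := {p | (p.2, p.1) ∈ A}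

/-- The color class `Â = A ∪ A⁻¹` of an implication class `A`. -/
def hat (A : Set (V × V)) : Set (V × V) := A ∪ inv A

/-- `Ã`: the set of vertices incident to an edge of `A`. -/
def tilde (A : Set (V × V)) : Set V := {v | ∃ w, (v, w) ∈ A ∨ (w, v) ∈ A}

/-- A transitive orientation `E'` of a symmetric edge set `F`:
`E' ⊆ F`, `E' ∩ E'⁻¹ = ∅`, `E' ∪ E'⁻¹ = F` and `E'` is transitive. -/
def IsTransOrientation (F E' : Set (V × V)) : Prop :=
  E' ⊆ F ∧ E' ∩ inv E' = ∅ ∧ E' ∪ inv E' = F ∧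
    ∀ a b c : V, (a, b) ∈ E' → (b, c) ∈ E' → (a, c) ∈ E'

/-- `G` is a comparability graph if `E` admits a transitive orientation. -/
def IsComparability (E : Set (V × V)) : Prop :=
  ∃ E' : Set (V × V), IsTransOrientation E E'

/-- `E(X)`: the set of edges of `E` with both endpoints in `X`. -/
def edgesOn (E : Set (V × V)) (X : Set V) : Set (V × V) :=
  {p ∈ E | p.1 ∈ X ∧ p.2 ∈ X}

/-- `X` is a partitive set of `G = (V,E)`. -/
def IsPartitive (E : Set (V × V)) (X : Set V) : Prop :=
  ∀ a ∈ X, ∀ b ∈ X, ∀ c ∉ X, ((a, c) ∈ E ↔ (b, c) ∈ E)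

/-- `X` is a "strong" partitive set of `G = (V,E)`. -/
def IsStrongPartitive (E : Set (V × V)) (X : Set V) : Prop :=
  IsPartitive E X ∧
    ∀ Y : Set V, IsPartitive E Y → (Y ∩ X).Nonempty → X ⊆ Y ∨ Y ⊆ X

/-- `X` is a maximal "strong" partitive set of `G = (V,E)`: a strong partitive
set different from `V` which is maximal, for inclusion, among the strong
partitive sets different from `V`. -/
def IsMaxStrongPartitive (E : Set (V × V)) (X : Set V) : Prop :=
  IsStrongPartitive E X ∧ X ≠ Set.univ ∧
    ∀ Y : Set V, IsStrongPartitive E Y → Y ≠ Set.univ → X ⊆ Y → X = Y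

/-- `X` is a partitive set of the induced subgraph `G(W) = (W, E(W))`. -/
def IsPartitiveIn (E : Set (V × V)) (W : Set V) (X : Set V) : Prop :=
  X ⊆ W ∧ ∀ a ∈ X, ∀ b ∈ X, ∀ c ∈ W \ X,
    ((a, c) ∈ edgesOn E W ↔ (b, c) ∈ edgesOn E W)

/-- `X` is a "strong" partitive set of the induced subgraph `G(W)`. -/
def IsStrongPartitiveIn (E : Set (V × V)) (W : Set V) (X : Set V) : Prop :=
  IsPartitiveIn E W X ∧
    ∀ Y : Set V, IsPartitiveIn E W Y → (Y ∩ X).Nonempty → X ⊆ Y ∨ Y ⊆ X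

/-- `X` is a maximal "strong" partitive set of the induced subgraph `G(W)`. -/
def IsMaxStrongPartitiveIn (E : Set (V × V)) (W : Set V) (X : Set V) : Prop :=
  IsStrongPartitiveIn E W X ∧ X ≠ W ∧
    ∀ Y : Set V, IsStrongPartitiveIn E W Y → Y ≠ W → X ⊆ Y → X = Y

/-- Two directed edges lie in the same color class of `G = (V,E)`. -/
def SameColor (E : Set (V × V)) (e e' : V × V) : Prop :=
  ∃ A : Set (V × V), IsImplicationClass E A ∧ e ∈ hat A ∧ e' ∈ hat A

/-- A simplex of `G = (V,E)` given by its (finite, nonempty) vertex set `VS`: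
a complete induced subgraph whose edges, for distinct unordered pairs,
lie in distinct color classes of `G`. -/
def IsSimplex (E : Set (V × V)) (VS : Set V) : Prop :=
  VS.Finite ∧ VS.Nonempty ∧
    (∀ a ∈ VS, ∀ b ∈ VS, a ≠ b → (a, b) ∈ E) ∧
    (∀ a ∈ VS, ∀ b ∈ VS, ∀ c ∈ VS, ∀ d ∈ VS, a ≠ b → c ≠ d →
      SameColor E (a, b) (c, d) → (a = c ∧ b = d) ∨ (a = d ∧ b = c))

/-- The rank of a simplex on `r+1` vertices is `r`. -/
noncomputable def simplexRank (VS : Set V) : ℕ := VS.ncard - 1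

/-- A maximal simplex: its vertex set is not properly contained in the
vertex set of another simplex. -/
def IsMaxSimplex (E : Set (V × V)) (VS : Set V) : Prop :=
  IsSimplex E VS ∧ ∀ VS' : Set V, IsSimplex E VS' → VS ⊆ VS' → VS = VS'

/-- The multiplex `M(S)` generated by a simplex with vertex set `VS`:
the union of all color classes of `G` containing an edge of the simplex. -/
def multiplex (E : Set (V × V)) (VS : Set V) : Set (V × V) :=
  {e | ∃ A : Set (V × V), IsImplicationClass E A ∧ e ∈ hat A ∧
    ∃ a ∈ VS, ∃ b ∈ VS, a ≠ b ∧ (a, b) ∈ hat A}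

/-- A maximal multiplex of `G`: a multiplex generated by a maximal simplex. -/
def IsMaxMultiplex (E : Set (V × V)) (M : Set (V × V)) : Prop :=
  ∃ VS : Set V, IsMaxSimplex E VS ∧ M = multiplex E VS

/-- `P` is a partition of the set `W`. -/
def IsPartitionOf (W : Set V) (P : Set (Set V)) : Prop :=
  (∀ X ∈ P, X.Nonempty) ∧ ⋃₀ P = W ∧
    ∀ X ∈ P, ∀ Y ∈ P, X ≠ Y → X ∩ Y = ∅

/-- Adjacency in the quotient of the induced subgraph `G(W)` by a partition:
two distinct blocks are adjacent iff some pair of representatives is an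
edge of `E(W)`. -/
def quotAdj (E : Set (V × V)) (W : Set V) (X Y : Set V) : Prop :=
  X ≠ Y ∧ ∃ x ∈ X, ∃ y ∈ Y, (x, y) ∈ edgesOn E W

/-- A partitive set of an abstract graph with vertex set `W` and adjacency
relation `Adj`. -/
def IsPartitiveGen {α : Type*} (W : Set α) (Adj : α → α → Prop) (X : Set α) : Prop :=
  X ⊆ W ∧ ∀ a ∈ X, ∀ b ∈ X, ∀ c ∈ W \ X, (Adj a c ↔ Adj b c)

/-- An abstract graph `(W, Adj)` is indecomposable if all its partitive
sets are trivial. -/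
def IndecomposableGen {α : Type*} (W : Set α) (Adj : α → α → Prop) : Prop :=
  ∀ X : Set α, IsPartitiveGen W Adj X → X.Subsingleton ∨ X = W

/-- An isomorphism between the graphs `(Vα, Aα)` and `(Vβ, Aβ)`:
a bijection of the vertex sets preserving adjacency in both directions. -/
def GraphIso {α β : Type*} (Vα : Set α) (Aα : α → α → Prop)
    (Vβ : Set β) (Aβ : β → β → Prop) : Prop :=
  ∃ f : α → β, Set.BijOn f Vα Vβ ∧
    ∀ a ∈ Vα, ∀ b ∈ Vα, (Aα a b ↔ Aβ (f a) (f b))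

/-- `(V', E')` is a subgraph of the induced subgraph `G(W)` of `G = (V,E)`. -/
def IsSubgraphOf (E : Set (V × V)) (W : Set V) (V' : Set V) (E' : Set (V × V)) : Prop :=
  V' ⊆ W ∧ E' ⊆ edgesOn E W ∧ (∀ e ∈ E', e.1 ∈ V' ∧ e.2 ∈ V') ∧
    (∀ a b : V, (a, b) ∈ E' ↔ (b, a) ∈ E')

end TransOrient

namespace TransOrient

section Aux

variable {V : Type*} {E : Set (V × V)}

private lemma gamma_symm_aux (hG : IsGraph E) {e f : V × V} (h : Gamma E e f) :
    Gamma E f e := by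
  obtain ⟨he, hf, h⟩ := h
  refine ⟨hf, he, ?_⟩
  rcases h with ⟨h1, h2⟩ | ⟨h1, h2⟩
  · exact Or.inl ⟨h1.symm, fun hc => h2 ((hG.2 _ _).mp hc)⟩
  · exact Or.inr ⟨h1.symm, fun hc => h2 ((hG.2 _ _).mp hc)⟩

private lemma rtg_symm_aux (hG : IsGraph E) {e f : V × V}
    (h : Relation.ReflTransGen (Gamma E) e f) :
    Relation.ReflTransGen (Gamma E) f e := by
  induction h with
  | refl => exact Relation.ReflTransGen.refl
  | tail _ hyz ih => exact Relation.ReflTransGen.head (gamma_symm_aux hG hyz) ih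

private lemma class_subset_E {e : V × V} (he : e ∈ E) :
    {e' | Relation.ReflTransGen (Gamma E) e e'} ⊆ E := by
  intro f hf
  induction hf with
  | refl => exact he
  | tail _ hyz _ => exact hyz.2.1

private lemma class_eq_of_mem (hG : IsGraph E) {A : Set (V × V)}
    (hA : IsImplicationClass E A) {f : V × V} (hf : f ∈ A) :
    A = {e' | Relation.ReflTransGen (Gamma E) f e'} := by
  obtain ⟨e, he, rfl⟩ := hA
  ext g
  constructor
  · intro hg
    exact Relation.ReflTransGen.trans (rtg_symm_aux hG hf) hg
  · intro hg
    exact Relation.ReflTransGen.trans hf hg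

private lemma implClass_subset_E {A : Set (V × V)}
    (hA : IsImplicationClass E A) : A ⊆ E := by
  obtain ⟨e, he, rfl⟩ := hA
  exact class_subset_E he

private lemma gamma_swap (hG : IsGraph E) {e f : V × V} (h : Gamma E e f) :
    Gamma E e.swap f.swap := by
  obtain ⟨he, hf, h⟩ := h
  refine ⟨(hG.2 _ _).mp he, (hG.2 _ _).mp hf, ?_⟩
  rcases h with ⟨h1, h2⟩ | ⟨h1, h2⟩
  · exact Or.inr ⟨h1, h2⟩
  · exact Or.inl ⟨h1, h2⟩

private lemma rtg_swap (hG : IsGraph E) {e f : V × V}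
    (h : Relation.ReflTransGen (Gamma E) e f) :
    Relation.ReflTransGen (Gamma E) e.swap f.swap := by
  induction h with
  | refl => exact Relation.ReflTransGen.refl
  | tail _ hyz ih => exact ih.tail (gamma_swap hG hyz)

private lemma inv_implClass (hG : IsGraph E) {A : Set (V × V)}
    (hA : IsImplicationClass E A) : IsImplicationClass E (inv A) := by
  obtain ⟨e, he, rfl⟩ := hA
  refine ⟨e.swap, (hG.2 _ _).mp he, ?_⟩
  ext f
  simp only [inv, Set.mem_setOf_eq]
  constructor
  · intro h
    have := rtg_swap hG h
    simpa using this
  · intro h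
    have := rtg_swap hG h
    rw [Prod.swap_swap] at this
    exact this

private lemma hat_inv (A : Set (V × V)) : hat (inv A) = hat A := by
  ext p
  simp only [hat, inv, Set.mem_union, Set.mem_setOf_eq]
  tauto

private lemma tilde_inv (A : Set (V × V)) : tilde (inv A) = tilde A := by
  ext v
  simp only [tilde, inv, Set.mem_setOf_eq]
  constructor
  · rintro ⟨w, h | h⟩
    · exact ⟨w, Or.inr h⟩
    · exact ⟨w, Or.inl h⟩
  · rintro ⟨w, h | h⟩
    · exact ⟨w, Or.inr h⟩
    · exact ⟨w, Or.inl h⟩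

private lemma mem_hat_swap {A : Set (V × V)} {x y : V} (h : (x, y) ∈ hat A) :
    (y, x) ∈ hat A := by
  rcases h with h | h
  · exact Or.inr h
  · exact Or.inl h

private lemma hat_subset_E (hG : IsGraph E) {A : Set (V × V)}
    (hA : IsImplicationClass E A) : hat A ⊆ E := by
  intro p hp
  rcases hp with hp | hp
  · exact implClass_subset_E hA hp
  · exact (hG.2 _ _).mp (implClass_subset_E hA hp)

/-- If `f ∈ hat A` then the implication class of `f` has the same hat as `A`. -/
private lemma hat_class_eq (hG : IsGraph E) {A : Set (V × V)}
    (hA : IsImplicationClass E A) {f : V × V} (hf : f ∈ hat A) :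
    hat {e' | Relation.ReflTransGen (Gamma E) f e'} = hat A := by
  rcases hf with hf | hf
  · rw [← class_eq_of_mem hG hA hf]
  · rw [← class_eq_of_mem hG (inv_implClass hG hA) hf, hat_inv]

/-- Hats are equal or disjoint. -/
private lemma hat_eq_of_mem (hG : IsGraph E) {A B : Set (V × V)}
    (hA : IsImplicationClass E A) (hB : IsImplicationClass E B)
    {f : V × V} (hfA : f ∈ hat A) (hfB : f ∈ hat B) : hat A = hat B := by
  rw [← hat_class_eq hG hA hfA, ← hat_class_eq hG hB hfB]

private lemma not_hat_of_rtg (hG : IsGraph E) {A : Set (V × V)}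
    (hA : IsImplicationClass E A) {f g : V × V} (hf : f ∉ hat A)
    (h : Relation.ReflTransGen (Gamma E) f g) : g ∉ hat A := by
  intro hg
  apply hf
  rw [← hat_class_eq hG hA hg]
  exact Or.inl (rtg_symm_aux hG h)

/-- The Triangle Lemma. -/
private lemma triangle (hG : IsGraph E) {A : Set (V × V)}
    (hA : IsImplicationClass E A) {a b c : V}
    (hbc : (b, c) ∈ A) (hab : (a, b) ∈ E) (hac : (a, c) ∈ E)
    (h1 : (a, b) ∉ hat A) (h2 : (a, c) ∉ hat A) :
    ∀ e ∈ A, Relation.ReflTransGen (Gamma E) (a, b) (a, e.1) ∧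
      Relation.ReflTransGen (Gamma E) (a, c) (a, e.2) := by
  have hAeq : A = {e' | Relation.ReflTransGen (Gamma E) (b, c) e'} :=
    class_eq_of_mem hG hA hbc
  intro e he
  have hR : Relation.ReflTransGen (Gamma E) (b, c) e := by rwa [hAeq] at he
  clear he
  induction hR with
  | refl => exact ⟨Relation.ReflTransGen.refl, Relation.ReflTransGen.refl⟩
  | @tail y z hxy hyz ih =>
    obtain ⟨y1, y2⟩ := y
    obtain ⟨z1, z2⟩ := z
    have hyA : (y1, y2) ∈ A := by rw [hAeq]; exact hxy
    have hzA : (z1, z2) ∈ A := by rw [hAeq]; exact hxy.tail hyz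
    have hzE : (z1, z2) ∈ E := hyz.2.1
    have hay1E : (a, y1) ∈ E := class_subset_E hab ih.1
    have hay2E : (a, y2) ∈ E := class_subset_E hac ih.2
    have hay1 : (a, y1) ∉ hat A := not_hat_of_rtg hG hA h1 ih.1
    have hay2 : (a, y2) ∉ hat A := not_hat_of_rtg hG hA h2 ih.2
    obtain ⟨hyE, -, hcase⟩ := hyz
    rcases hcase with ⟨hfst, hnE⟩ | ⟨hsnd, hnE⟩
    · -- y1 = z1 and (y2, z2) ∉ E
      simp only at hfst hnE
      subst hfst
      refine ⟨ih.1, ?_⟩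
      have hane : a ≠ z2 := by
        intro heq
        rw [← heq] at hzA
        exact hay1 (mem_hat_swap (Or.inl hzA))
      have haz2E : (a, z2) ∈ E := by
        by_contra hne
        have hstep : Gamma E (y1, a) (y1, z2) :=
          ⟨(hG.2 _ _).mp hay1E, hzE, Or.inl ⟨rfl, hne⟩⟩
        have hy1a : (y1, a) ∉ hat A := fun hh => hay1 (mem_hat_swap hh)
        exact not_hat_of_rtg hG hA hy1a (Relation.ReflTransGen.single hstep)
          (Or.inl hzA)
      exact ih.2.tail ⟨hay2E, haz2E, Or.inl ⟨rfl, hnE⟩⟩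
    · -- y2 = z2 and (y1, z1) ∉ E
      simp only at hsnd hnE
      subst hsnd
      refine ⟨?_, ih.2⟩
      have hane : a ≠ z1 := by
        intro heq
        rw [← heq] at hzA
        exact hay2 (Or.inl hzA)
      have haz1E : (a, z1) ∈ E := by
        by_contra hne
        have hstep : Gamma E (a, y2) (z1, y2) :=
          ⟨hay2E, hzE, Or.inr ⟨rfl, hne⟩⟩
        exact not_hat_of_rtg hG hA hay2 (Relation.ReflTransGen.single hstep)
          (Or.inl hzA)
      exact ih.1.tail ⟨hay1E, haz1E, Or.inl ⟨rfl, hnE⟩⟩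

/-- Corollary of the Triangle Lemma: the apex is not in `Ã`. -/
private lemma apex_not_tilde (hG : IsGraph E) {A : Set (V × V)}
    (hA : IsImplicationClass E A) {a b c : V}
    (hbc : (b, c) ∈ A) (hab : (a, b) ∈ E) (hac : (a, c) ∈ E)
    (h1 : (a, b) ∉ hat A) (h2 : (a, c) ∉ hat A) : a ∉ tilde A := by
  rintro ⟨w, hw | hw⟩
  · have := (triangle hG hA hbc hab hac h1 h2 (a, w) hw).1
    exact hG.1 a (class_subset_E hab this)
  · have := (triangle hG hA hbc hab hac h1 h2 (w, a) hw).2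
    exact hG.1 a (class_subset_E hac this)

private lemma tilde_eq_hat_version (A : Set (V × V)) :
    tilde A = {v | ∃ w, (v, w) ∈ hat A} := by
  ext v
  simp only [tilde, hat, inv, Set.mem_setOf_eq, Set.mem_union]

end Aux

end TransOrient

open TransOrient in
/-- **(Proposition 3.1)** For color classes `Â` and `B̂` of `G`:
`Â = B̂ ↔ Ã = B̃`. -/
theorem hat_eq_iff_tilde_eq
    {V : Type*} (E : Set (V × V)) (hG : IsGraph E)
    (A B : Set (V × V)) (hA : IsImplicationClass E A) (hB : IsImplicationClass E B) :
    hat A = hat B ↔ tilde A = tilde B := by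
  constructor
  · intro h
    rw [TransOrient.tilde_eq_hat_version, TransOrient.tilde_eq_hat_version, h]
  · intro hT
    by_contra hne
    have hdisj : ∀ f, f ∈ hat A → f ∉ hat B := fun f hfA hfB =>
      hne (TransOrient.hat_eq_of_mem hG hA hB hfA hfB)
    have hA' := hA
    obtain ⟨e, heE, hAeq⟩ := hA'
    have heA : e ∈ A := by rw [hAeq]; exact Relation.ReflTransGen.refl
    obtain ⟨b, c⟩ := e
    have hc : c ∈ tilde B := by rw [← hT]; exact ⟨b, Or.inr heA⟩
    obtain ⟨a, ha⟩ := hc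
    have hacB : (a, c) ∈ hat B := by
      rcases ha with h | h
      · exact Or.inr h
      · exact Or.inl h
    have hacE : (a, c) ∈ E := TransOrient.hat_subset_E hG hB hacB
    have hbcA : (b, c) ∈ hat A := Or.inl heA
    have hbcE : (b, c) ∈ E := TransOrient.implClass_subset_E hA heA
    have habE : (a, b) ∈ E := by
      by_contra hne'
      have hstep : Gamma E (c, b) (c, a) :=
        ⟨(hG.2 _ _).mp hbcE, (hG.2 _ _).mp hacE,
          Or.inl ⟨rfl, fun hc' => hne' ((hG.2 _ _).mp hc')⟩⟩
      have hca : (c, a) ∈ hat A := by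
        rw [← TransOrient.hat_class_eq hG hA (TransOrient.mem_hat_swap hbcA)]
        exact Or.inl (Relation.ReflTransGen.single hstep)
      exact hdisj _ hca (TransOrient.mem_hat_swap hacB)
    by_cases habA : (a, b) ∈ hat A
    · obtain ⟨B₀, hB₀, hmem, hhat, htilde⟩ :
        ∃ B₀, IsImplicationClass E B₀ ∧ (a, c) ∈ B₀ ∧ hat B₀ = hat B ∧
          tilde B₀ = tilde B := by
        rcases ha with h | h
        · exact ⟨inv B, TransOrient.inv_implClass hG hB, h,
            TransOrient.hat_inv B, TransOrient.tilde_inv B⟩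
        · exact ⟨B, hB, h, rfl, rfl⟩
      have hba : (b, a) ∈ E := (hG.2 _ _).mp habE
      have h1 : (b, a) ∉ hat B₀ := by
        rw [hhat]
        intro hh
        exact hdisj _ habA (TransOrient.mem_hat_swap hh)
      have h2 : (b, c) ∉ hat B₀ := by
        rw [hhat]
        exact hdisj _ hbcA
      have hb : b ∉ tilde B₀ :=
        TransOrient.apex_not_tilde hG hB₀ hmem hba hbcE h1 h2
      rw [htilde, ← hT] at hb
      exact hb ⟨c, Or.inl heA⟩
    · have h2 : (a, c) ∉ hat A := fun hc' => hdisj _ hc' hacB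
      have hna : a ∉ tilde A :=
        TransOrient.apex_not_tilde hG hA heA habE hacE habA h2
      apply hna
      rw [hT]
      rcases ha with h | h
      · exact ⟨c, Or.inr h⟩
      · exact ⟨c, Or.inl h⟩
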